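/- Let V₁, V₂: ℝ → [0,∞) be Orlicz functions with V₁(x)/V₂(x) → ∞ as |x| → ∞. Set R̃ := sup{ m_{V₂}(ν) : ν a probability measure on ℝ with m_{V₁}(ν) ≤ 1 }, which is finite. Then for every R ∈ [R̃, ∞), every ε-family and every fixed k ∈ ℕ: lim_{ε→0} lim_{n→∞} d_w( λ^{(n,k)}_{1,V₁ | R+ε,V₂}, λ^{(n,k)}_{1,V₁} ) = 0, where λ^{(n,k)}_{1,V₁ | R+ε,V₂} is the law of the first k coordinates of a uniform random point X₁^{n,V₁} on B_1^{n,V₁} conditioned on X₁^{n,V₁} ∈ B_{R+ε}^{n,V₂}, λ^{(n,k)}_{1,V₁} is the law of the first k coordinates of a uniform random point on B_1^{n,V₁}, and d_w is a metric inducing weak convergence of probability measures on ℝ^k (e.g., the Lévy–Prokhorov metric). -/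

import Mathlib

open MeasureTheory Real Filter Topology ENNReal Classical

noncomputable section

/-- An Orlicz function: convex, symmetric, vanishing only at `0`, nonnegative. -/
def IsOrlicz (V : ℝ → ℝ) : Prop :=
  ConvexOn ℝ Set.univ V ∧ (∀ x, V (-x) = V x) ∧ V 0 = 0 ∧ (∀ x, x ≠ 0 → 0 < V x) ∧
    (∀ x, 0 ≤ V x)

/-- The Orlicz ball `B_R^{n,V} = {x ∈ ℝⁿ : ∑ V(x_k) ≤ R n}`. -/
def OrliczBall (V : ℝ → ℝ) (R : ℝ) (n : ℕ) : Set (Fin n → ℝ) :=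
  {x | ∑ i, V (x i) ≤ R * n}

/-- The uniform distribution on the Orlicz ball (normalized Lebesgue measure). -/
def unifBall (V : ℝ → ℝ) (R : ℝ) (n : ℕ) : Measure (Fin n → ℝ) :=
  (volume (OrliczBall V R n))⁻¹ • volume.restrict (OrliczBall V R n)

/-- The `V`-moment `m_V(μ) = ∫ V dμ`, as a lower integral in `[0,∞]`. -/
def mV (V : ℝ → ℝ) (μ : Measure ℝ) : ℝ≥0∞ := ∫⁻ x, ENNReal.ofReal (V x) ∂μ

/-- Projection onto the first `k` coordinates. -/
def proj (k n : ℕ) (x : Fin n → ℝ) : Fin k → ℝ :=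
  fun i => if h : (i : ℕ) < n then x ⟨i, h⟩ else 0

/-- `R̃ := sup { m_{V₂}(ν) : m_{V₁}(ν) ≤ 1 }`. -/
def Rtilde (V₁ V₂ : ℝ → ℝ) : ℝ≥0∞ :=
  ⨆ (ν : ProbabilityMeasure ℝ) (_ : mV V₁ (ν : Measure ℝ) ≤ 1), mV V₂ (ν : Measure ℝ)

/-- An Orlicz function is continuous (being convex on all of `ℝ`). -/
lemma IsOrlicz.continuous {V : ℝ → ℝ} (hV : IsOrlicz V) : Continuous V :=
  continuousOn_univ.mp (hV.1.continuousOn isOpen_univ)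

/-- An Orlicz ball is a measurable set. -/
lemma measurableSet_orliczBall {V : ℝ → ℝ} (hV : IsOrlicz V) (R : ℝ) (n : ℕ) :
    MeasurableSet (OrliczBall V R n) := by
  have hc : Continuous fun x : Fin n → ℝ => ∑ i, V (x i) :=
    continuous_finset_sum _ fun i _ => hV.continuous.comp (continuous_apply i)
  exact measurableSet_le hc.measurable measurable_const

/-- Under the growth assumption, `V₂` is dominated by `V₁` plus a constant. -/
lemma exists_linear_bound {V₁ V₂ : ℝ → ℝ} (hV₁ : IsOrlicz V₁) (hV₂ : IsOrlicz V₂)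
    (hgrow : Tendsto (fun x : ℝ => V₁ x / V₂ x) (atTop ⊔ atBot) atTop) :
    ∃ C : ℝ, 0 ≤ C ∧ ∀ x, V₂ x ≤ V₁ x + C := by
  have hev := hgrow.eventually_ge_atTop 1
  rw [eventually_sup] at hev
  obtain ⟨M₁, hM₁⟩ := eventually_atTop.mp hev.1
  obtain ⟨M₂, hM₂⟩ := eventually_atBot.mp hev.2
  set M : ℝ := max 1 (max M₁ (-M₂)) with hMdef
  have hM1 : (1 : ℝ) ≤ M := le_max_left _ _
  have hM0 : 0 < M := lt_of_lt_of_le one_pos hM1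
  refine ⟨V₂ M, hV₂.2.2.2.2 M, fun x => ?_⟩
  by_cases hx : |x| ≤ M
  · -- convexity bound on `[-M, M]`
    have habs := abs_le.mp hx
    have ha : (0 : ℝ) ≤ (M - x) / (2 * M) := by
      apply div_nonneg <;> linarith [habs.2]
    have hb : (0 : ℝ) ≤ (M + x) / (2 * M) := by
      apply div_nonneg <;> linarith [habs.1]
    have hab : (M - x) / (2 * M) + (M + x) / (2 * M) = 1 := by
      rw [← add_div, div_eq_one_iff_eq (by positivity)]; ring
    have hconv := hV₂.1.2 (Set.mem_univ (-M)) (Set.mem_univ M) ha hb hab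
    simp only [smul_eq_mul] at hconv
    have hpt : (M - x) / (2 * M) * (-M) + (M + x) / (2 * M) * M = x := by
      field_simp; ring
    rw [hpt] at hconv
    have : V₂ x ≤ V₂ M := by
      calc V₂ x ≤ (M - x) / (2 * M) * V₂ (-M) + (M + x) / (2 * M) * V₂ M := hconv
        _ = ((M - x) / (2 * M) + (M + x) / (2 * M)) * V₂ M := by rw [hV₂.2.1]; ring
        _ = V₂ M := by rw [hab, one_mul]
    linarith [hV₁.2.2.2.2 x]
  · -- growth bound outside `[-M, M]`
    push_neg at hx
    have hxne : x ≠ 0 := by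
      intro h; rw [h] at hx; simp at hx; linarith
    have hpos := hV₂.2.2.2.1 x hxne
    have hratio : 1 ≤ V₁ x / V₂ x := by
      rcases le_or_gt 0 x with h | h
      · have : M < x := by rwa [abs_of_nonneg h] at hx
        exact hM₁ x (le_trans (le_trans (le_max_left _ _) (le_max_right _ _)) this.le)
      · have : M < -x := by rwa [abs_of_neg h] at hx
        have hxle : x ≤ M₂ := by
          have : -M₂ ≤ M := le_trans (le_max_right _ _) (le_max_right _ _)
          linarith
        exact hM₂ x hxle
    have := (one_le_div hpos).mp hratio
    linarith [hV₂.2.2.2.2 M]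

/-- `R̃` is finite. -/
lemma rtilde_ne_top {V₁ V₂ : ℝ → ℝ} (hV₁ : IsOrlicz V₁) (hV₂ : IsOrlicz V₂)
    (hgrow : Tendsto (fun x : ℝ => V₁ x / V₂ x) (atTop ⊔ atBot) atTop) :
    Rtilde V₁ V₂ ≠ ⊤ := by
  obtain ⟨C, hC0, hC⟩ := exists_linear_bound hV₁ hV₂ hgrow
  have hbound : Rtilde V₁ V₂ ≤ 1 + ENNReal.ofReal C := by
    refine iSup₂_le fun ν hν => ?_
    have step : mV V₂ (ν : Measure ℝ) ≤
        ∫⁻ x, (ENNReal.ofReal (V₁ x) + ENNReal.ofReal C) ∂(ν : Measure ℝ) := by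
      refine lintegral_mono fun x => ?_
      calc ENNReal.ofReal (V₂ x) ≤ ENNReal.ofReal (V₁ x + C) :=
            ENNReal.ofReal_le_ofReal (hC x)
        _ = ENNReal.ofReal (V₁ x) + ENNReal.ofReal C :=
            ENNReal.ofReal_add (hV₁.2.2.2.2 x) hC0
    rw [lintegral_add_right _ measurable_const, lintegral_const] at step
    simp only [measure_univ, mul_one] at step
    exact le_trans step (add_le_add_left hν _)
  exact ne_top_of_le_ne_top (by simp [ENNReal.add_ne_top]) hbound

/-- Key inclusion: for `R' ≥ R̃`, `B₁^{n,V₁} ⊆ B_{R'}^{n,V₂}`. -/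
lemma orliczBall_subset {V₁ V₂ : ℝ → ℝ} (hV₁ : IsOrlicz V₁) (hV₂ : IsOrlicz V₂)
    (hfin : Rtilde V₁ V₂ ≠ ⊤) {R' : ℝ} (hR0 : 0 ≤ R') (hR : (Rtilde V₁ V₂).toReal ≤ R')
    (n : ℕ) : OrliczBall V₁ 1 n ⊆ OrliczBall V₂ R' n := by
  rcases Nat.eq_zero_or_pos n with rfl | hn
  · intro x _; simp [OrliczBall]
  intro x hx
  have hx' : ∑ i, V₁ (x i) ≤ (n : ℝ) := by simpa [OrliczBall] using hx
  have hnne : (n : ℝ≥0∞) ≠ 0 := by exact_mod_cast Nat.pos_iff_ne_zero.mp hn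
  have hntop : (n : ℝ≥0∞) ≠ ⊤ := ENNReal.natCast_ne_top n
  set μ : Measure ℝ := (n : ℝ≥0∞)⁻¹ • ∑ i : Fin n, Measure.dirac (x i) with hμdef
  have hμuniv : μ Set.univ = 1 := by
    simp only [hμdef, Measure.smul_apply, Measure.finset_sum_apply, smul_eq_mul]
    simp [Measure.dirac_apply, ENNReal.inv_mul_cancel hnne hntop]
  have hprob : IsProbabilityMeasure μ := ⟨hμuniv⟩
  have hmV : ∀ V : ℝ → ℝ, mV V μ = (n : ℝ≥0∞)⁻¹ * ∑ i, ENNReal.ofReal (V (x i)) := by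
    intro V
    rw [mV, hμdef, lintegral_smul_measure, lintegral_finset_sum_measure]
    simp [lintegral_dirac]
  have hν1 : mV V₁ μ ≤ 1 := by
    rw [hmV]
    have hsum : ∑ i, ENNReal.ofReal (V₁ (x i)) ≤ (n : ℝ≥0∞) := by
      rw [← ENNReal.ofReal_sum_of_nonneg fun i _ => hV₁.2.2.2.2 (x i)]
      calc ENNReal.ofReal (∑ i, V₁ (x i)) ≤ ENNReal.ofReal (n : ℝ) :=
            ENNReal.ofReal_le_ofReal hx'
        _ = (n : ℝ≥0∞) := ENNReal.ofReal_natCast n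
    calc (n : ℝ≥0∞)⁻¹ * ∑ i, ENNReal.ofReal (V₁ (x i)) ≤ (n : ℝ≥0∞)⁻¹ * n :=
          mul_le_mul_right hsum _
      _ = 1 := ENNReal.inv_mul_cancel hnne hntop
  have hle : mV V₂ μ ≤ Rtilde V₁ V₂ := by
    have : mV V₂ ((⟨μ, hprob⟩ : ProbabilityMeasure ℝ) : Measure ℝ) ≤ Rtilde V₁ V₂ :=
      le_iSup₂_of_le (⟨μ, hprob⟩ : ProbabilityMeasure ℝ) hν1 le_rfl
    exact this
  have hRt : Rtilde V₁ V₂ ≤ ENNReal.ofReal R' :=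
    (ENNReal.le_ofReal_iff_toReal_le hfin hR0).mpr hR
  have hkey : ∑ i, ENNReal.ofReal (V₂ (x i)) ≤ (n : ℝ≥0∞) * ENNReal.ofReal R' := by
    have h1 : (n : ℝ≥0∞)⁻¹ * ∑ i, ENNReal.ofReal (V₂ (x i)) ≤ ENNReal.ofReal R' :=
      le_trans (by rw [← hmV]; exact hle) hRt
    calc ∑ i, ENNReal.ofReal (V₂ (x i))
        = (n : ℝ≥0∞) * ((n : ℝ≥0∞)⁻¹ * ∑ i, ENNReal.ofReal (V₂ (x i))) := by
          rw [← mul_assoc, ENNReal.mul_inv_cancel hnne hntop, one_mul]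
      _ ≤ (n : ℝ≥0∞) * ENNReal.ofReal R' := mul_le_mul_right h1 _
  have : ENNReal.ofReal (∑ i, V₂ (x i)) ≤ ENNReal.ofReal (R' * n) := by
    rw [ENNReal.ofReal_sum_of_nonneg fun i _ => hV₂.2.2.2.2 (x i)]
    calc ∑ i, ENNReal.ofReal (V₂ (x i)) ≤ (n : ℝ≥0∞) * ENNReal.ofReal R' := hkey
      _ = ENNReal.ofReal (R' * n) := by
          rw [ENNReal.ofReal_mul hR0, ENNReal.ofReal_natCast, mul_comm]
  have hRn : (0 : ℝ) ≤ R' * n := by positivity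
  exact (ENNReal.ofReal_le_ofReal_iff hRn).mp this

/-- Conditioning a normalized restricted measure on a superset of the support
does nothing. -/
lemma cond_of_subset {α : Type*} [MeasurableSpace α] (m : Measure α) {B S : Set α}
    (hS : MeasurableSet S) (hBS : B ⊆ S) :
    ProbabilityTheory.cond ((m B)⁻¹ • m.restrict B) S = (m B)⁻¹ • m.restrict B := by
  set μ : Measure α := (m B)⁻¹ • m.restrict B with hμdef
  have hres : μ.restrict S = μ := by
    rw [hμdef, Measure.restrict_smul, Measure.restrict_restrict hS,
      Set.inter_eq_self_of_subset_right hBS]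
  have happ : μ S = (m B)⁻¹ * m B := by
    rw [hμdef, Measure.smul_apply, Measure.restrict_apply hS,
      Set.inter_eq_self_of_subset_right hBS, smul_eq_mul]
  rw [ProbabilityTheory.cond, hres, happ]
  rcases eq_or_ne (m B) 0 with h0 | h0
  · have hz : m.restrict B = 0 := Measure.restrict_eq_zero.mpr h0
    simp [hμdef, hz]
  rcases eq_or_ne (m B) ⊤ with htop | htop
  · simp [hμdef, htop]
  · rw [ENNReal.inv_mul_cancel h0 htop, inv_one, one_smul]

/-- For a large `V₂`-radius `R ≥ R̃` (with `R̃` finite), conditioning a uniform random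
point of `B₁^{n,V₁}` on lying in `B_{R+ε}^{n,V₂}` does not change the limiting law of
the first `k` coordinates: it merges weakly (Lévy–Prokhorov metric, `n → ∞` followed
by `ε → 0`) with the unconditioned law. -/
theorem stmt19 (V₁ V₂ : ℝ → ℝ) (hV₁ : IsOrlicz V₁) (hV₂ : IsOrlicz V₂)
    (hgrow : Tendsto (fun x : ℝ => V₁ x / V₂ x) (atTop ⊔ atBot) atTop) :
    Rtilde V₁ V₂ ≠ ⊤ ∧
    ∀ R : ℝ, (Rtilde V₁ V₂).toReal ≤ R → ∀ k : ℕ,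
      ∀ δ : ℝ, 0 < δ → ∃ ε₀ : ℝ, 0 < ε₀ ∧ ∀ ε : ℝ, 0 < ε → ε ≤ ε₀ →
        ∃ N : ℕ, ∀ n : ℕ, N ≤ n →
          levyProkhorovDist
            (Measure.map (proj k n)
              (ProbabilityTheory.cond (unifBall V₁ 1 n) (OrliczBall V₂ (R + ε) n)))
            (Measure.map (proj k n) (unifBall V₁ 1 n)) < δ := by
  have hfin := rtilde_ne_top hV₁ hV₂ hgrow
  refine ⟨hfin, fun R hR k δ hδ => ⟨1, one_pos, fun ε hε _ => ⟨0, fun n _ => ?_⟩⟩⟩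
  have hR0 : (0 : ℝ) ≤ R + ε := by
    have := ENNReal.toReal_nonneg (a := Rtilde V₁ V₂); linarith
  have hsub : OrliczBall V₁ 1 n ⊆ OrliczBall V₂ (R + ε) n :=
    orliczBall_subset hV₁ hV₂ hfin hR0 (by linarith) n
  have hS : MeasurableSet (OrliczBall V₂ (R + ε) n) := measurableSet_orliczBall hV₂ _ n
  have hcond : ProbabilityTheory.cond (unifBall V₁ 1 n) (OrliczBall V₂ (R + ε) n)
      = unifBall V₁ 1 n := cond_of_subset volume hS hsub
  rw [hcond, levyProkhorovDist_self]
  exact hδ
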